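/- Let R be a commutative ring with unity, let G be a group lying in Strebel's class D(R), and let f : M → N be a homomorphism of left RG-modules with N projective. Then for every index set I the following holds: if there is an injective R-module homomorphism from the free R-module R^{(I)} (finitely supported functions I → R) into the image of the induced map R ⊗_{RG} M → R ⊗_{RG} N, then there is an injective RG-module homomorphism from the free RG-module (RG)^{(I)} into the image of f. In other words, the maximal rank of free RG-submodules of Im f is greater than or equal to the maximal rank of free R-submodules of Im(1_R ⊗ f). -/

import Mathlib

universe u v w

/-- The submodule of a module `M` over the group ring `RG` generated by the
elements `g • m - m`; the quotient `M ⧸ coinvKer R G M` is the module of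
`G`-coinvariants `R ⊗_{RG} M`. -/
noncomputable def coinvKer (R : Type w) [CommRing R] (G : Type u) [Group G]
    (M : Type v) [AddCommGroup M] [Module (MonoidAlgebra R G) M] :
    Submodule (MonoidAlgebra R G) M :=
  Submodule.span (MonoidAlgebra R G)
    {x | ∃ (g : G) (m : M), x = (MonoidAlgebra.of R G g) • m - m}

/-- Strebel's class `D(R)`: a homomorphism `f : P → Q` of projective `RG`-modules
is injective whenever the induced map `R ⊗_{RG} P → R ⊗_{RG} Q` on coinvariants
is injective. -/
def InStrebelD (R : Type w) [CommRing R] (G : Type u) [Group G] : Prop :=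
  ∀ (P Q : Type (max u w)) [AddCommGroup P] [AddCommGroup Q]
    [Module (MonoidAlgebra R G) P] [Module (MonoidAlgebra R G) Q],
    Module.Projective (MonoidAlgebra R G) P →
    Module.Projective (MonoidAlgebra R G) Q →
    ∀ f : P →ₗ[MonoidAlgebra R G] Q,
      (∀ x : P, f x ∈ coinvKer R G Q → x ∈ coinvKer R G P) →
      Function.Injective f

/-- The augmentation map `RG → R` as an `R`-linear map. -/
noncomputable def aug (R : Type w) [CommRing R] (G : Type u) [Group G] :
    MonoidAlgebra R G →ₗ[R] R :=
  ((MonoidAlgebra.lift R R G) 1).toLinearMap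

@[simp] lemma aug_single (R : Type w) [CommRing R] (G : Type u) [Group G] (g : G) (r : R) :
    aug R G (MonoidAlgebra.single g r) = r := by
  simp [aug, MonoidAlgebra.lift_single]

/-- Lemma A: modulo the coinvariants kernel, `a • x` equals `aug a • x`. -/
lemma smul_sub_mem_coinvKer (R : Type w) [CommRing R] (G : Type u) [Group G]
    (M : Type v) [AddCommGroup M] [Module (MonoidAlgebra R G) M]
    (a : MonoidAlgebra R G) (x : M) :
    a • x - MonoidAlgebra.single (1 : G) (aug R G a) • x ∈ coinvKer R G M := by
  refine MonoidAlgebra.induction_on (motive := fun a => a • x - MonoidAlgebra.single (1 : G) (aug R G a) • x ∈ coinvKer R G M) a ?_ ?_ ?_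
  · intro g
    have h1 : aug R G (MonoidAlgebra.of R G g) = 1 := by
      simp [MonoidAlgebra.of_apply]
    rw [h1, ← MonoidAlgebra.one_def, one_smul]
    exact Submodule.subset_span ⟨g, x, rfl⟩
  · intro a b ha hb
    have key : (a + b) • x - MonoidAlgebra.single (1 : G) (aug R G (a + b)) • x
        = (a • x - MonoidAlgebra.single (1 : G) (aug R G a) • x)
          + (b • x - MonoidAlgebra.single (1 : G) (aug R G b) • x) := by
      rw [map_add, add_smul, show (MonoidAlgebra.single (1 : G) (aug R G a + aug R G b)
        : MonoidAlgebra R G) = MonoidAlgebra.single 1 (aug R G a)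
          + MonoidAlgebra.single 1 (aug R G b) from MonoidAlgebra.single_add _ _ _, add_smul]
      abel
    rw [key]
    exact Submodule.add_mem _ ha hb
  · intro r a ha
    have key : (r • a) • x - MonoidAlgebra.single (1 : G) (aug R G (r • a)) • x
        = MonoidAlgebra.single (1 : G) r •
            (a • x - MonoidAlgebra.single (1 : G) (aug R G a) • x) := by
      rw [map_smul, smul_eq_mul, smul_sub, smul_smul, smul_smul,
        MonoidAlgebra.single_mul_single, one_mul,
        show (r • a : MonoidAlgebra R G) = MonoidAlgebra.single 1 r * a by
          rw [Algebra.smul_def]; rfl,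
        mul_smul]
    rw [key]
    exact Submodule.smul_mem _ _ ha

lemma smul_mem_coinvKer (R : Type w) [CommRing R] (G : Type u) [Group G]
    (M : Type v) [AddCommGroup M] [Module (MonoidAlgebra R G) M]
    (a : MonoidAlgebra R G) (x : M) (ha : aug R G a = 0) :
    a • x ∈ coinvKer R G M := by
  have h := smul_sub_mem_coinvKer R G M a x
  rwa [ha, show (MonoidAlgebra.single (1 : G) (0 : R) : MonoidAlgebra R G) = 0 from
    MonoidAlgebra.single_zero _, zero_smul, sub_zero] at h

/-- Lemma B: an element of a free module all of whose coefficients have zero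
augmentation lies in the coinvariants kernel. -/
lemma mem_coinvKer_free (R : Type w) [CommRing R] (G : Type u) [Group G]
    {J : Type v} (x : J →₀ MonoidAlgebra R G) (hx : ∀ j, aug R G (x j) = 0) :
    x ∈ coinvKer R G (J →₀ MonoidAlgebra R G) := by
  classical
  rw [← Finsupp.sum_single x]
  refine Submodule.sum_mem _ (fun j _ => ?_)
  have h1 : Finsupp.single j (x j) = (x j) • Finsupp.single j (1 : MonoidAlgebra R G) := by
    rw [Finsupp.smul_single, smul_eq_mul, mul_one]
  rw [h1]
  exact smul_mem_coinvKer _ _ _ _ _ (hx j)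

/-- If `G` lies in Strebel's class `D(R)` and `f : M → N` is a homomorphism of
`RG`-modules with `N` projective, then for every index set `I`: if the free
`R`-module `R^{(I)}` embeds into the image of the induced map
`R ⊗_{RG} M → R ⊗_{RG} N` on coinvariants, then the free `RG`-module `(RG)^{(I)}`
embeds into the image of `f`. -/
theorem free_rank_image_le_of_inStrebelD
    (R : Type w) [CommRing R] (G : Type u) [Group G]
    (hG : InStrebelD R G)
    (M N : Type (max u w)) [AddCommGroup M] [AddCommGroup N]
    [Module (MonoidAlgebra R G) M] [Module (MonoidAlgebra R G) N]
    [Module R M] [Module R N]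
    [IsScalarTower R (MonoidAlgebra R G) M] [IsScalarTower R (MonoidAlgebra R G) N]
    (hN : Module.Projective (MonoidAlgebra R G) N)
    (f : M →ₗ[MonoidAlgebra R G] N)
    (I : Type v)
    (h : ∃ φ : (I →₀ R) →ₗ[R] (N ⧸ coinvKer R G N),
        Function.Injective φ ∧
        LinearMap.range φ ≤ LinearMap.range
          ((((coinvKer R G N).mkQ).restrictScalars R).comp (f.restrictScalars R))) :
    ∃ ψ : (I →₀ MonoidAlgebra R G) →ₗ[MonoidAlgebra R G] N,
      Function.Injective ψ ∧ LinearMap.range ψ ≤ LinearMap.range f := by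
  classical
  obtain ⟨φ, hφinj, hφran⟩ := h
  have hlift : ∀ i : I, ∃ m : M,
      (coinvKer R G N).mkQ (f m) = φ (Finsupp.single i 1) := by
    intro i
    obtain ⟨m, hm⟩ := hφran ⟨Finsupp.single i 1, rfl⟩
    exact ⟨m, hm⟩
  choose m hm using hlift
  refine ⟨Finsupp.linearCombination (MonoidAlgebra R G) (fun i => f (m i)), ?_, ?_⟩
  · -- injectivity
    set ψ := Finsupp.linearCombination (MonoidAlgebra R G) (fun i => f (m i)) with hψdef
    have hker : ∀ x, ψ x = 0 → x = 0 := by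
      intro x hx
      set s := x.support with hs
      set e : Fin s.card → I := fun j => ((s.equivFin.symm j : s) : I) with he_def
      have he : Function.Injective e :=
        fun a b hab => s.equivFin.symm.injective (Subtype.ext hab)
      set g := Finsupp.linearCombination (MonoidAlgebra R G)
        (fun j : Fin s.card => f (m (e j))) with hg_def
      -- the commutation square with coinvariants
      have hcomm : (((coinvKer R G N).mkQ).restrictScalars R).comp (g.restrictScalars R)
          = φ.comp ((Finsupp.lmapDomain R R e).comp
              (Finsupp.mapRange.linearMap (aug R G))) := by
        refine Finsupp.lhom_ext' fun j => LinearMap.ext fun a => ?_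
        have hL : (coinvKer R G N).mkQ (g (Finsupp.single j a))
            = aug R G a • (coinvKer R G N).mkQ (f (m (e j))) := by
          rw [hg_def, Finsupp.linearCombination_single]
          have h1 : (coinvKer R G N).mkQ (a • f (m (e j)))
              = (coinvKer R G N).mkQ (MonoidAlgebra.single (1 : G) (aug R G a)
                  • f (m (e j))) :=
            (Submodule.Quotient.eq _).mpr (smul_sub_mem_coinvKer R G N a (f (m (e j))))
          rw [h1, map_smul]
          rw [show (MonoidAlgebra.single (1 : G) (aug R G a) : MonoidAlgebra R G)
            = algebraMap R (MonoidAlgebra R G) (aug R G a) from rfl]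
          rw [algebraMap_smul]
        have hR : (Finsupp.lmapDomain R R e)
              ((Finsupp.mapRange.linearMap (aug R G)) (Finsupp.single j a))
            = Finsupp.single (e j) (aug R G a) := by
          simp [Finsupp.mapDomain_single]
        simp only [LinearMap.comp_apply, LinearMap.coe_comp, Function.comp_apply,
          LinearMap.coe_restrictScalars, Finsupp.lsingle_apply]
        rw [hL, hR, show (Finsupp.single (e j) (aug R G a) : I →₀ R)
          = aug R G a • Finsupp.single (e j) (1 : R) by
            rw [Finsupp.smul_single, smul_eq_mul, mul_one],
          map_smul, ← hm (e j)]
      -- g is injective via Strebel's condition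
      have hginj : Function.Injective g := by
        refine hG (Fin s.card →₀ MonoidAlgebra R G) N inferInstance hN g ?_
        intro y hy
        refine mem_coinvKer_free R G y ?_
        have h0 : φ (((Finsupp.lmapDomain R R e).comp
            (Finsupp.mapRange.linearMap (aug R G))) y) = 0 := by
          have := DFunLike.congr_fun hcomm y
          simp only [LinearMap.comp_apply, LinearMap.coe_comp, Function.comp_apply,
            LinearMap.coe_restrictScalars] at this ⊢
          rw [← this]
          exact (Submodule.Quotient.mk_eq_zero _).mpr hy
        have h1 : ((Finsupp.lmapDomain R R e).comp
            (Finsupp.mapRange.linearMap (aug R G))) y = 0 := by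
          apply hφinj; rw [h0, map_zero]
        have h2 : Finsupp.mapRange (aug R G) (map_zero _) y = 0 := by
          apply Finsupp.mapDomain_injective he
          simpa [Finsupp.mapRange.linearMap_apply] using h1
        intro j
        have := DFunLike.congr_fun h2 j
        simpa [Finsupp.mapRange_apply] using this
      -- transfer back to x
      set y := Finsupp.comapDomain e x he.injOn with hy_def
      have hsupp : ↑x.support ⊆ Set.range e := by
        intro i hi
        exact ⟨s.equivFin ⟨i, hi⟩, by simp [he_def]⟩
      have hxy : Finsupp.mapDomain e y = x :=
        Finsupp.mapDomain_comapDomain e he x hsupp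
      have hgy : g y = 0 := by
        rw [hg_def, show (fun j : Fin s.card => f (m (e j)))
          = (fun i => f (m i)) ∘ e from rfl, ← Finsupp.linearCombination_mapDomain,
          hxy, ← hψdef, hx]
      have hy0 : y = 0 := by
        apply hginj; rw [hgy, map_zero]
      rw [← hxy, hy0, Finsupp.mapDomain_zero]
    intro a b hab
    have : a - b = 0 := hker _ (by rw [map_sub, hab, sub_self])
    exact sub_eq_zero.mp this
  · -- range inclusion
    rw [Finsupp.range_linearCombination]
    refine Submodule.span_le.mpr ?_
    rintro _ ⟨i, rfl⟩
    exact ⟨m i, rfl⟩
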